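/- Under the assumptions of the previous statement (ρu = bu' + (σ²/2)u'' + f on (a,∞), f' > 0 strictly decreasing, b concave, ρ > sup b', σ > 0): if x₀ is a local minimum point of u' in (a,∞), then u' has no local maximum point in (x₀,∞). -/

import Mathlib

theorem stmt_12 (a ρ : ℝ) (ha : 0 ≤ a) (hρ : 0 < ρ)
    (b b' σ f f' : ℝ → ℝ)
    (hb : ∀ x > (0:ℝ), HasDerivAt b (b' x) x)
    (hbconc : ConcaveOn ℝ (Set.Ioi (0:ℝ)) b)
    (hσpos : ∀ x > (0:ℝ), 0 < σ x)
    (hf : ∀ x > (0:ℝ), HasDerivAt f (f' x) x)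
    (hf'pos : ∀ x > (0:ℝ), 0 < f' x)
    (hf'anti : StrictAntiOn f' (Set.Ioi (0:ℝ)))
    (hρb : ∀ x > (0:ℝ), b' x < ρ)
    (u u' u'' u''' : ℝ → ℝ)
    (hu : ∀ x ∈ Set.Ioi a, HasDerivAt u (u' x) x)
    (hu' : ∀ x ∈ Set.Ioi a, HasDerivAt u' (u'' x) x)
    (hu'' : ∀ x ∈ Set.Ioi a, HasDerivAt u'' (u''' x) x)
    (hode : ∀ x ∈ Set.Ioi a,
      ρ * u x = b x * u' x + (1 / 2) * (σ x) ^ 2 * u'' x + f x)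
    (x₀ : ℝ) (hx₀ : x₀ ∈ Set.Ioi a) (hmin : IsLocalMin u' x₀) :
    ∀ x₁ ∈ Set.Ioi x₀, ¬ IsLocalMax u' x₁ := by
  intro x₁ hx₁ hmax
  have hx₁a : x₁ ∈ Set.Ioi a := Set.mem_Ioi.mpr (lt_trans hx₀ hx₁)
  have hpos : ∀ x ∈ Set.Ioi a, (0:ℝ) < x := fun x hx => lt_of_le_of_lt ha hx
  -- the auxiliary function g = ρu - bu' - f = (σ²/2) u''
  set g : ℝ → ℝ := fun x => ρ * u x - b x * u' x - f x with hgdef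
  have hgx : ∀ x ∈ Set.Ioi a, g x = (1/2) * σ x ^ 2 * u'' x := by
    intro x hx
    have := hode x hx
    simp only [hgdef]
    linarith
  have hgd : ∀ c ∈ Set.Ioi a, u'' c = 0 →
      HasDerivAt g ((ρ - b' c) * u' c - f' c) c := by
    intro c hc h0
    have hc0 : (0:ℝ) < c := hpos c hc
    have h1 := ((hu c hc).const_mul ρ).sub ((hb c hc0).mul (hu' c hc))
    have h2 := h1.sub (hf c hc0)
    refine h2.congr_deriv ?_
    rw [h0]; ring
  -- local min at c forces f' c ≤ (ρ - b' c) * u' c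
  have keyMin : ∀ c ∈ Set.Ioi a, IsLocalMin u' c → f' c ≤ (ρ - b' c) * u' c := by
    intro c hc hm
    by_contra hlt
    push_neg at hlt
    have hc0 : (0:ℝ) < c := hpos c hc
    have h0 : u'' c = 0 := hm.hasDerivAt_eq_zero (hu' c hc)
    have hgc : g c = 0 := by rw [hgx c hc, h0]; ring
    have hslope := hasDerivAt_iff_tendsto_slope.mp (hgd c hc h0)
    have hneg : (ρ - b' c) * u' c - f' c < 0 := by linarith
    have hev1 : ∀ᶠ x in nhdsWithin c (Set.Ioi c), slope g c x < 0 :=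
      (hslope.mono_left (nhdsWithin_mono c (fun x hx => ne_of_gt hx))).eventually_lt_const hneg
    have hev2 : ∀ᶠ x in nhdsWithin c (Set.Ioi c), x ∈ Set.Ioi a :=
      Filter.Eventually.filter_mono nhdsWithin_le_nhds (isOpen_Ioi.eventually_mem hc)
    have hev3 : ∀ᶠ x in nhdsWithin c (Set.Ioi c), u' c ≤ u' x :=
      hm.filter_mono nhdsWithin_le_nhds
    obtain ⟨d, hd, hsub⟩ := mem_nhdsGT_iff_exists_Ioo_subset.mp
      (hev1.and (hev2.and hev3))
    have hu''neg : ∀ x ∈ Set.Ioo c d, u'' x < 0 := by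
      intro x hx
      obtain ⟨hs, hxa, _⟩ := hsub hx
      have hx0 : (0:ℝ) < x := hpos x hxa
      rw [slope_def_field, hgc, sub_zero] at hs
      have hxc : 0 < x - c := sub_pos.mpr hx.1
      have hgxneg : g x < 0 := by
        have := mul_neg_of_neg_of_pos hs hxc
        rwa [div_mul_cancel₀ _ (ne_of_gt hxc)] at this
      have hσ2 : 0 < σ x ^ 2 := pow_pos (hσpos x hx0) 2
      rw [hgx x hxa] at hgxneg
      by_contra hcon
      push_neg at hcon
      nlinarith [mul_nonneg hσ2.le hcon]
    have hcd : c < d := hd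
    set e : ℝ := (c + d) / 2 with hedef
    have hce : c < e := by simp only [hedef]; linarith
    have hed : e < d := by simp only [hedef]; linarith
    have hanti : StrictAntiOn u' (Set.Icc c e) := by
      apply strictAntiOn_of_deriv_neg (convex_Icc c e)
      · intro x hx
        have hxa : x ∈ Set.Ioi a := Set.mem_Ioi.mpr (lt_of_lt_of_le hc hx.1)
        exact (hu' x hxa).continuousAt.continuousWithinAt
      · intro x hx
        rw [interior_Icc] at hx
        have hxa : x ∈ Set.Ioi a := Set.mem_Ioi.mpr (lt_trans hc hx.1)
        rw [(hu' x hxa).deriv]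
        exact hu''neg x ⟨hx.1, lt_trans hx.2 hed⟩
    have h1 : u' e < u' c :=
      hanti (Set.left_mem_Icc.mpr hce.le) (Set.right_mem_Icc.mpr hce.le) hce
    have h2 : u' c ≤ u' e := (hsub ⟨hce, hed⟩).2.2
    linarith
  -- local max at c forces (ρ - b' c) * u' c ≤ f' c
  have keyMax : ∀ c ∈ Set.Ioi a, IsLocalMax u' c → (ρ - b' c) * u' c ≤ f' c := by
    intro c hc hm
    by_contra hlt
    push_neg at hlt
    have hc0 : (0:ℝ) < c := hpos c hc
    have h0 : u'' c = 0 := hm.hasDerivAt_eq_zero (hu' c hc)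
    have hgc : g c = 0 := by rw [hgx c hc, h0]; ring
    have hslope := hasDerivAt_iff_tendsto_slope.mp (hgd c hc h0)
    have hneg : 0 < (ρ - b' c) * u' c - f' c := by linarith
    have hev1 : ∀ᶠ x in nhdsWithin c (Set.Ioi c), 0 < slope g c x :=
      (hslope.mono_left (nhdsWithin_mono c (fun x hx => ne_of_gt hx))).eventually_const_lt hneg
    have hev2 : ∀ᶠ x in nhdsWithin c (Set.Ioi c), x ∈ Set.Ioi a :=
      Filter.Eventually.filter_mono nhdsWithin_le_nhds (isOpen_Ioi.eventually_mem hc)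
    have hev3 : ∀ᶠ x in nhdsWithin c (Set.Ioi c), u' x ≤ u' c :=
      hm.filter_mono nhdsWithin_le_nhds
    obtain ⟨d, hd, hsub⟩ := mem_nhdsGT_iff_exists_Ioo_subset.mp
      (hev1.and (hev2.and hev3))
    have hu''pos : ∀ x ∈ Set.Ioo c d, 0 < u'' x := by
      intro x hx
      obtain ⟨hs, hxa, _⟩ := hsub hx
      have hx0 : (0:ℝ) < x := hpos x hxa
      rw [slope_def_field, hgc, sub_zero] at hs
      have hxc : 0 < x - c := sub_pos.mpr hx.1
      have hgxpos : 0 < g x := by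
        have := mul_pos hs hxc
        rwa [div_mul_cancel₀ _ (ne_of_gt hxc)] at this
      have hσ2 : 0 < σ x ^ 2 := pow_pos (hσpos x hx0) 2
      rw [hgx x hxa] at hgxpos
      by_contra hcon
      push_neg at hcon
      nlinarith [mul_nonneg hσ2.le (neg_nonneg.mpr hcon)]
    have hcd : c < d := hd
    set e : ℝ := (c + d) / 2 with hedef
    have hce : c < e := by simp only [hedef]; linarith
    have hed : e < d := by simp only [hedef]; linarith
    have hmono : StrictMonoOn u' (Set.Icc c e) := by
      apply strictMonoOn_of_deriv_pos (convex_Icc c e)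
      · intro x hx
        have hxa : x ∈ Set.Ioi a := Set.mem_Ioi.mpr (lt_of_lt_of_le hc hx.1)
        exact (hu' x hxa).continuousAt.continuousWithinAt
      · intro x hx
        rw [interior_Icc] at hx
        have hxa : x ∈ Set.Ioi a := Set.mem_Ioi.mpr (lt_trans hc hx.1)
        rw [(hu' x hxa).deriv]
        exact hu''pos x ⟨hx.1, lt_trans hx.2 hed⟩
    have h1 : u' c < u' e :=
      hmono (Set.left_mem_Icc.mpr hce.le) (Set.right_mem_Icc.mpr hce.le) hce
    have h2 : u' e ≤ u' c := (hsub ⟨hce, hed⟩).2.2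
    linarith
  -- b' is antitone on Ioi 0
  have hb'anti : ∀ p q : ℝ, 0 < p → p < q → b' q ≤ b' p := by
    intro p q hp hpq
    have hq : (0:ℝ) < q := lt_trans hp hpq
    have hA := hbconc.antitoneOn_deriv (fun x hx => (hb x hx).differentiableAt)
    have := hA hp hq hpq.le
    rwa [(hb p hp).deriv, (hb q hq).deriv] at this
  -- the contradiction lemma: local min p below local max q with u' p ≤ u' q
  have L3 : ∀ p ∈ Set.Ioi a, ∀ q ∈ Set.Ioi a, p < q → IsLocalMin u' p →
      IsLocalMax u' q → u' p ≤ u' q → False := by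
    intro p hp q hq hpq hminp hmaxq hle
    have hp0 : (0:ℝ) < p := hpos p hp
    have hq0 : (0:ℝ) < q := hpos q hq
    have A := keyMin p hp hminp
    have B := keyMax q hq hmaxq
    have hfpq : f' q < f' p := hf'anti hp0 hq0 hpq
    have h1 : 0 < ρ - b' p := by linarith [hρb p hp0]
    have h2 : 0 < ρ - b' q := by linarith [hρb q hq0]
    have h3 : b' q ≤ b' p := hb'anti p q hp0 hpq
    have hup : 0 < u' p := by nlinarith [hf'pos p hp0]
    have c1 : (ρ - b' p) * u' p ≤ (ρ - b' q) * u' p :=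
      mul_le_mul_of_nonneg_right (by linarith) hup.le
    have c2 : (ρ - b' q) * u' p ≤ (ρ - b' q) * u' q :=
      mul_le_mul_of_nonneg_left hle h2.le
    linarith [hf'pos p hp0]
  -- main argument
  by_cases hcase : u' x₀ ≤ u' x₁
  · exact L3 x₀ hx₀ x₁ hx₁a hx₁ hmin hmax hcase
  push_neg at hcase
  have hconts : ContinuousOn u' (Set.Icc x₀ x₁) := by
    intro x hx
    have hxa : x ∈ Set.Ioi a := Set.mem_Ioi.mpr (lt_of_lt_of_le hx₀ hx.1)
    exact (hu' x hxa).continuousAt.continuousWithinAt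
  obtain ⟨c, hcmem, hcmin⟩ := isCompact_Icc.exists_isMinOn
    (Set.nonempty_Icc.mpr (le_of_lt hx₁)) hconts
  have hc1 : u' c ≤ u' x₁ := hcmin (Set.right_mem_Icc.mpr (le_of_lt hx₁))
  have hcne : x₀ < c := by
    rcases lt_or_eq_of_le hcmem.1 with h | h
    · exact h
    · exfalso; rw [← h] at hc1; linarith
  rcases lt_or_eq_of_le hcmem.2 with hclt | hceq
  · -- c is an interior minimum on [x₀, x₁]
    have hca : c ∈ Set.Ioi a := Set.mem_Ioi.mpr (lt_trans hx₀ hcne)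
    have hlocmin : IsLocalMin u' c := hcmin.isLocalMin (Icc_mem_nhds hcne hclt)
    exact L3 c hca x₁ hx₁a hclt hlocmin hmax hc1
  · -- the minimum is attained at x₁: u' is constant just left of x₁
    subst hceq
    obtain ⟨ε, hε, hball⟩ := Metric.eventually_nhds_iff.mp hmax
    set m : ℝ := max x₀ (c - ε) with hmdef
    have hm1 : m < c := max_lt hcne (by linarith)
    set c' : ℝ := (m + c) / 2 with hc'def
    have hc'1 : m < c' := by simp only [hc'def]; linarith
    have hc'2 : c' < c := by simp only [hc'def]; linarith
    have hconst : ∀ x ∈ Set.Ioo m c, u' x = u' c := by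
      intro x hx
      have hx₀x : x₀ ≤ x := le_of_lt (lt_of_le_of_lt (le_max_left _ _) hx.1)
      have hle : u' x ≤ u' c := by
        apply hball
        rw [Real.dist_eq]
        rw [abs_lt]
        constructor
        · have : c - ε ≤ m := le_max_right _ _
          linarith [hx.1]
        · linarith [hx.2]
      have hge : u' c ≤ u' x := hcmin ⟨hx₀x, le_of_lt hx.2⟩
      linarith
    have hc'mem : c' ∈ Set.Ioo m c := ⟨hc'1, hc'2⟩
    have hlocmin' : IsLocalMin u' c' := by
      have : IsMinOn u' (Set.Ioo m c) c' := by
        intro x hx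
        simp only [Set.mem_setOf_eq]
        rw [hconst x hx, hconst c' hc'mem]
      exact this.isLocalMin (Ioo_mem_nhds hc'1 hc'2)
    have hc'a : c' ∈ Set.Ioi a :=
      Set.mem_Ioi.mpr (lt_trans hx₀ (lt_of_le_of_lt (le_max_left _ _) hc'1))
    exact L3 c' hc'a c hx₁a hc'2 hlocmin' hmax (le_of_eq (hconst c' hc'mem))
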